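/- Let (A, μ, α) be an ergodic W*-dynamical system with A^K the von Neumann subalgebra generated by the eigenoperators of α. Then the restriction μ|_{A^K} is a tracial state, and consequently A^K is a finite von Neumann algebra. -/

import Mathlib

noncomputable section

local notation "⟪" x ", " y "⟫" => @inner ℂ _ _ x y

/-- Conjugation of a bounded operator by a unitary (surjective linear isometry). -/
def conjAct {H : Type*} [NormedAddCommGroup H] [InnerProductSpace ℂ H]
    (u : H ≃ₗᵢ[ℂ] H) (a : H →L[ℂ] H) : H →L[ℂ] H :=
  u.toLinearIsometry.toContinuousLinearMap ∘L a ∘L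
    u.symm.toLinearIsometry.toContinuousLinearMap

section Aux

variable {H : Type*} [NormedAddCommGroup H] [InnerProductSpace ℂ H]

lemma conjAct_apply (u : H ≃ₗᵢ[ℂ] H) (a : H →L[ℂ] H) (ξ : H) :
    conjAct u a ξ = u (a (u.symm ξ)) := rfl

lemma conjAct_comp (u : H ≃ₗᵢ[ℂ] H) (a b : H →L[ℂ] H) :
    conjAct u (a ∘L b) = conjAct u a ∘L conjAct u b := by
  ext ξ; simp [conjAct_apply]

lemma conjAct_smul (u : H ≃ₗᵢ[ℂ] H) (c : ℂ) (a : H →L[ℂ] H) :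
    conjAct u (c • a) = c • conjAct u a := by
  ext ξ; simp [conjAct_apply]

lemma conjAct_star [CompleteSpace H] (u : H ≃ₗᵢ[ℂ] H) (a : H →L[ℂ] H) :
    conjAct u (star a) = star (conjAct u a) := by
  rw [ContinuousLinearMap.star_eq_adjoint, ContinuousLinearMap.star_eq_adjoint,
    ContinuousLinearMap.eq_adjoint_iff]
  intro ξ η
  have h1 : ∀ (x y : H), ⟪u x, y⟫ = ⟪x, u.symm y⟫ := by
    intro x y
    conv_lhs => rw [← u.apply_symm_apply y]
    rw [u.inner_map_map]
  rw [conjAct_apply, conjAct_apply, h1]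
  rw [ContinuousLinearMap.adjoint_inner_left]
  conv_rhs => rw [← u.apply_symm_apply ξ, u.inner_map_map]

end Aux

/-- Bounded extension of the densely defined right multiplication map. -/
lemma rightMul_extension {H : Type*} [NormedAddCommGroup H] [InnerProductSpace ℂ H]
    [CompleteSpace H] (A : Submodule ℂ (H →L[ℂ] H)) (Ω ξ₀ : H) (c : ℝ) (hc : 0 < c)
    (hbound : ∀ y ∈ A, ‖y ξ₀‖ ^ 2 = c * ‖y Ω‖ ^ 2) :
    ∃ R : H →L[ℂ] H, (∀ a ∈ A, R (a Ω) = a ξ₀) ∧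
      (∀ ξ : H, (∀ a ∈ A, ⟪a Ω, ξ⟫ = 0) → R ξ = 0) := by
  classical
  let e₀ : ↥A →ₗ[ℂ] H :=
    { toFun := fun y => (y : H →L[ℂ] H) Ω
      map_add' := fun y z => rfl
      map_smul' := fun c y => rfl }
  let ρ₀ : ↥A →ₗ[ℂ] H :=
    { toFun := fun y => (y : H →L[ℂ] H) ξ₀
      map_add' := fun y z => rfl
      map_smul' := fun c y => rfl }
  have hkey : ∀ y : ↥A, ‖ρ₀ y‖ = Real.sqrt c * ‖e₀ y‖ := by
    intro y
    have hb : ‖ρ₀ y‖ ^ 2 = c * ‖e₀ y‖ ^ 2 := hbound (y : H →L[ℂ] H) y.2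
    have hsq : ‖ρ₀ y‖ ^ 2 = (Real.sqrt c * ‖e₀ y‖) ^ 2 := by
      rw [hb, mul_pow, Real.sq_sqrt hc.le]
    have h1 : (0:ℝ) ≤ Real.sqrt c * ‖e₀ y‖ := by positivity
    nlinarith [norm_nonneg (ρ₀ y)]
  have hkerle : LinearMap.ker e₀ ≤ LinearMap.ker ρ₀ := by
    intro y hy
    rw [LinearMap.mem_ker] at hy ⊢
    have := hkey y
    rw [hy, norm_zero, mul_zero, norm_eq_zero] at this
    exact this
  let W : Submodule ℂ H := LinearMap.range e₀
  let K : Submodule ℂ H := W.topologicalClosure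
  have hKclosed : IsClosed (K : Set H) := W.isClosed_topologicalClosure
  haveI : CompleteSpace K := hKclosed.completeSpace_coe
  let f₁ : (↥A ⧸ LinearMap.ker e₀) →ₗ[ℂ] H := Submodule.liftQ _ ρ₀ hkerle
  let q : (↥A ⧸ LinearMap.ker e₀) ≃ₗ[ℂ] ↥W := e₀.quotKerEquivRange
  let f₀ : ↥W →ₗ[ℂ] H := f₁ ∘ₗ (q.symm : ↥W →ₗ[ℂ] ↥A ⧸ LinearMap.ker e₀)
  have hf₀ : ∀ y : ↥A, f₀ ⟨e₀ y, LinearMap.mem_range_self e₀ y⟩ = ρ₀ y := by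
    intro y
    show f₁ (q.symm ⟨e₀ y, _⟩) = ρ₀ y
    rw [show q.symm ⟨e₀ y, LinearMap.mem_range_self e₀ y⟩ = (LinearMap.ker e₀).mkQ y from
      LinearMap.quotKerEquivRange_symm_apply_image e₀ y _]
    exact Submodule.liftQ_apply _ ρ₀ y
  have hf₀bound : ∀ ξ : ↥W, ‖f₀ ξ‖ ≤ Real.sqrt c * ‖ξ‖ := by
    rintro ⟨ξ, hξ⟩
    obtain ⟨y, rfl⟩ := hξ
    rw [hf₀ y, hkey y]
    exact le_of_eq rfl
  let f : ↥W →L[ℂ] H := f₀.mkContinuous (Real.sqrt c) hf₀bound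
  have hWK : W ≤ K := W.le_topologicalClosure
  let inclL : ↥W →ₗ[ℂ] ↥K := Submodule.inclusion hWK
  let incl : ↥W →L[ℂ] ↥K := inclL.mkContinuous 1 (fun ξ => by
    rw [one_mul]; rfl)
  have hisom : Isometry incl := by
    apply Isometry.of_dist_eq
    intro a b
    rfl
  have hdense : DenseRange incl := by
    intro ζ
    have himg : (Subtype.val '' Set.range incl) = (W : Set H) := by
      ext w
      constructor
      · rintro ⟨w', ⟨v, rfl⟩, rfl⟩
        exact v.2
      · intro hw
        exact ⟨incl ⟨w, hw⟩, ⟨⟨w, hw⟩, rfl⟩, rfl⟩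
    rw [closure_subtype, himg]
    show (ζ : H) ∈ closure (W : Set H)
    rw [← W.topologicalClosure_coe]
    exact ζ.2
  let T : ↥K →L[ℂ] H := f.extend incl
  have hT : ∀ w : ↥W, T (incl w) = f w := fun w =>
    ContinuousLinearMap.extend_eq f hdense hisom.isUniformInducing w
  refine ⟨T ∘L (K.orthogonalProjectionOnto : H →L[ℂ] ↥K), ?_, ?_⟩
  · intro a ha
    have hmem : a Ω ∈ W := ⟨⟨a, ha⟩, rfl⟩
    have hproj : (K.orthogonalProjectionOnto (a Ω) : ↥K) = ⟨a Ω, hWK hmem⟩ := by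
      apply Subtype.ext
      exact K.starProjection_eq_self_iff.mpr (hWK hmem)
    show T (K.orthogonalProjectionOnto (a Ω)) = a ξ₀
    rw [hproj]
    have : (⟨a Ω, hWK hmem⟩ : ↥K) = incl ⟨a Ω, hmem⟩ := rfl
    rw [this, hT]
    exact hf₀ ⟨a, ha⟩
  · intro ξ hξ
    have hperp : ξ ∈ Kᗮ := by
      rw [Submodule.mem_orthogonal]
      intro u hu
      have hWzero : Set.EqOn (fun w : H => ⟪w, ξ⟫) (fun _ => (0:ℂ)) (W : Set H) := by
        rintro w ⟨y, rfl⟩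
        exact hξ (y : H →L[ℂ] H) y.2
      have hcont : Continuous (fun w : H => ⟪w, ξ⟫) :=
        Continuous.inner continuous_id continuous_const
      have hcl := hWzero.closure hcont continuous_const
      have : (u : H) ∈ closure (W : Set H) := by
        rw [← W.topologicalClosure_coe]
        exact hu
      exact hcl this
    show T (K.orthogonalProjectionOnto ξ) = 0
    rw [Submodule.orthogonalProjectionOnto_apply_of_mem_orthogonal hperp]
    exact map_zero T



/- STATEMENT 16: For an ergodic W*-dynamical system (in GNS form: M with cyclic
separating unit vector Ω giving the faithful normal state μ = ⟨Ω, ·Ω⟩, action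
implemented by unitaries U_g fixing Ω, ergodicity meaning the fixed point algebra
is ℂ1), the restriction of μ to the von Neumann subalgebra A^K generated by the
eigenoperators of the action (the double commutant of the set of eigenoperators)
is tracial, and consequently A^K is a finite von Neumann algebra (every isometry
in A^K is a unitary). -/
set_option maxHeartbeats 4000000 in
theorem state_tracial_on_eigenoperator_algebra_of_ergodic
    {H : Type*} [NormedAddCommGroup H] [InnerProductSpace ℂ H] [CompleteSpace H]
    {G : Type*} [Group G]
    (M : VonNeumannAlgebra H) (Ω : H) (hΩ : ‖Ω‖ = 1)
    (hcyc : Dense ((fun a : H →L[ℂ] H => a Ω) '' (M : Set (H →L[ℂ] H))))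
    (hsep : ∀ a ∈ M, a Ω = 0 → a = 0)
    (U : G →* (H ≃ₗᵢ[ℂ] H)) (hUΩ : ∀ g, U g Ω = Ω)
    (hUM : ∀ g, conjAct (U g) '' (M : Set (H →L[ℂ] H)) = (M : Set (H →L[ℂ] H)))
    (herg : ∀ a ∈ M, (∀ g, conjAct (U g) a = a) → ∃ c : ℂ, a = c • (1 : H →L[ℂ] H))
    (AK : Set (H →L[ℂ] H))
    (hAK : AK = Set.centralizer (Set.centralizer
      {u : H →L[ℂ] H | u ∈ M ∧ u ≠ 0 ∧ ∃ χ : G → ℂ, ∀ g, conjAct (U g) u = χ g • u})) :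
    (∀ a ∈ AK, ∀ b ∈ AK, ⟪Ω, (a ∘L b) Ω⟫ = ⟪Ω, (b ∘L a) Ω⟫) ∧
    (∀ v ∈ AK, star v * v = 1 → v * star v = 1) := by
  set S : Set (H →L[ℂ] H) :=
    {u : H →L[ℂ] H | u ∈ M ∧ u ≠ 0 ∧ ∃ χ : G → ℂ, ∀ g, conjAct (U g) u = χ g • u} with hSdef
  set μ : (H →L[ℂ] H) → ℂ := fun a => ⟪Ω, a Ω⟫ with hμdef
  have hΩΩ : ⟪Ω, Ω⟫ = 1 := by
    rw [inner_self_eq_norm_sq_to_K, hΩ]; norm_num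
  have hΩne : Ω ≠ 0 := by
    intro h; rw [h, norm_zero] at hΩ; norm_num at hΩ
  -- invariance of the state
  have hUsymmΩ : ∀ g : G, (U g).symm Ω = Ω := by
    intro g
    conv_lhs => rw [← hUΩ g]
    exact (U g).symm_apply_apply Ω
  have hinv : ∀ (g : G) (a : H →L[ℂ] H), μ (conjAct (U g) a) = μ a := by
    intro g a
    show ⟪Ω, (U g) (a ((U g).symm Ω))⟫ = ⟪Ω, a Ω⟫
    rw [hUsymmΩ g]
    conv_rhs => rw [← (U g).inner_map_map, hUΩ g]
  -- star-closedness of S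
  have hstarS : ∀ u ∈ S, star u ∈ S := by
    rintro u ⟨huM, hune, χ, hχ⟩
    refine ⟨star_mem huM, ?_, fun g => (starRingEnd ℂ) (χ g), ?_⟩
    · intro h
      apply hune
      have := congrArg star h
      simpa using this
    · intro g
      rw [conjAct_star, hχ g, star_smul]
      rfl
  -- 1 ∈ S
  have honeS : (1 : H →L[ℂ] H) ∈ S := by
    refine ⟨one_mem M, ?_, fun _ => 1, ?_⟩
    · intro h
      apply hΩne
      have := congrFun (congrArg DFunLike.coe h) Ω
      simpa using this
    · intro g
      ext ξ
      simp [conjAct_apply]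
  have hμsmul : ∀ (c : ℂ) (a : H →L[ℂ] H), μ (c • a) = c * μ a := by
    intro c a
    simp [hμdef, inner_smul_right]
  have hμnormsq : ∀ a : H →L[ℂ] H, μ (star a ∘L a) = (‖a Ω‖ : ℂ) ^ 2 := by
    intro a
    show ⟪Ω, (star a) (a Ω)⟫ = _
    rw [ContinuousLinearMap.star_eq_adjoint, ContinuousLinearMap.adjoint_inner_right]
    exact inner_self_eq_norm_sq_to_K _
  have hsepS : ∀ u ∈ S, u Ω ≠ 0 := by
    intro u hu h
    exact hu.2.1 (hsep u hu.1 h)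
  -- star u ∘L u is a positive scalar
  have hcc : ∀ u ∈ S, ∃ c : ℝ, 0 < c ∧ star u ∘L u = (c : ℂ) • 1 := by
    intro u hu
    obtain ⟨huM, hune, χ, hχ⟩ := hu
    have huS : u ∈ S := ⟨huM, hune, χ, hχ⟩
    have hnz : μ (star u ∘L u) ≠ 0 := by
      rw [hμnormsq]
      simpa using hsepS u huS
    have hfix : ∀ g, conjAct (U g) (star u ∘L u) = star u ∘L u := by
      intro g
      have h1 : conjAct (U g) (star u ∘L u)
          = (starRingEnd ℂ (χ g) * χ g) • (star u ∘L u) := by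
        rw [conjAct_comp, conjAct_star, hχ g, star_smul, ContinuousLinearMap.smul_comp,
          ContinuousLinearMap.comp_smul, smul_smul]
        rfl
      have h2 : μ (star u ∘L u) = (starRingEnd ℂ (χ g) * χ g) * μ (star u ∘L u) := by
        conv_lhs => rw [← hinv g, h1]
        exact hμsmul _ _
      have h3 : starRingEnd ℂ (χ g) * χ g = 1 := by
        apply mul_right_cancel₀ hnz
        rw [one_mul, ← h2]
      rw [h1, h3, one_smul]
    obtain ⟨c, hc⟩ := herg _ (mul_mem (star_mem huM) huM) (by
      simpa [ContinuousLinearMap.mul_def] using hfix)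
    rw [ContinuousLinearMap.mul_def] at hc
    have hceq : c = (‖u Ω‖ : ℂ) ^ 2 := by
      have h := hμnormsq u
      rw [hc, hμsmul] at h
      simp only [hμdef, ContinuousLinearMap.one_apply, hΩΩ, mul_one] at h
      exact h
    refine ⟨‖u Ω‖ ^ 2, ?_, ?_⟩
    · have h0 : u Ω ≠ 0 := hsepS u huS
      have : 0 < ‖u Ω‖ := norm_pos_iff.mpr h0
      positivity
    · rw [hc, hceq]
      norm_num
  -- two-sided inverses
  have hinvS : ∀ u ∈ S, ∃ w : H →L[ℂ] H, u ∘L w = 1 ∧ w ∘L u = 1 := by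
    intro u hu
    obtain ⟨c, hcpos, hc⟩ := hcc u hu
    obtain ⟨c', hc'pos, hc'⟩ := hcc (star u) (hstarS u hu)
    rw [star_star] at hc'
    have hcne : (c : ℂ) ≠ 0 := by exact_mod_cast hcpos.ne'
    have hc'ne : (c' : ℂ) ≠ 0 := by exact_mod_cast hc'pos.ne'
    have hleft : ((c : ℂ)⁻¹ • star u) ∘L u = 1 := by
      rw [ContinuousLinearMap.smul_comp, hc, smul_smul, inv_mul_cancel₀ hcne, one_smul]
    have hright : u ∘L ((c' : ℂ)⁻¹ • star u) = 1 := by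
      rw [ContinuousLinearMap.comp_smul, hc', smul_smul, inv_mul_cancel₀ hc'ne, one_smul]
    have heq : (c : ℂ)⁻¹ • star u = (c' : ℂ)⁻¹ • star u :=
      left_inv_eq_right_inv (by rw [ContinuousLinearMap.mul_def]; exact hleft)
        (by rw [ContinuousLinearMap.mul_def]; exact hright)
    exact ⟨_, hright, heq ▸ hleft⟩
  -- S is closed under composition
  have hmulS : ∀ u ∈ S, ∀ v ∈ S, u ∘L v ∈ S := by
    intro u hu v hv
    obtain ⟨huM, hune, χ, hχ⟩ := hu
    obtain ⟨hvM, hvne, ψ, hψ⟩ := hv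
    refine ⟨?_, ?_, fun g => χ g * ψ g, ?_⟩
    · simpa [ContinuousLinearMap.mul_def] using mul_mem huM hvM
    · obtain ⟨c, hcpos, hc⟩ := hcc u ⟨huM, hune, χ, hχ⟩
      have hcne : (c : ℂ) ≠ 0 := by exact_mod_cast hcpos.ne'
      intro h
      apply hvne
      have h2 : (star u ∘L u) ∘L v = 0 := by
        rw [ContinuousLinearMap.comp_assoc, h, ContinuousLinearMap.comp_zero]
      rw [hc, ContinuousLinearMap.smul_comp, ContinuousLinearMap.one_def,
        ContinuousLinearMap.id_comp, smul_eq_zero] at h2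
      exact h2.resolve_left hcne
    · intro g
      rw [conjAct_comp, hχ g, hψ g, ContinuousLinearMap.smul_comp,
        ContinuousLinearMap.comp_smul, smul_smul]
  -- trace property on S
  have htrS : ∀ u ∈ S, ∀ v ∈ S, μ (u ∘L v) = μ (v ∘L u) := by
    intro u hu v hv
    obtain ⟨huM, hune, χ, hχ⟩ := hu
    obtain ⟨hvM, hvne, ψ, hψ⟩ := hv
    have hconj_uv : ∀ g, conjAct (U g) (u ∘L v) = (χ g * ψ g) • (u ∘L v) := by
      intro g
      rw [conjAct_comp, hχ g, hψ g, ContinuousLinearMap.smul_comp,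
        ContinuousLinearMap.comp_smul, smul_smul]
    have hconj_vu : ∀ g, conjAct (U g) (v ∘L u) = (χ g * ψ g) • (v ∘L u) := by
      intro g
      rw [conjAct_comp, hχ g, hψ g, ContinuousLinearMap.smul_comp,
        ContinuousLinearMap.comp_smul, smul_smul, mul_comm (ψ g) (χ g)]
    by_cases hall : ∀ g, χ g * ψ g = 1
    · have hfix : ∀ g, conjAct (U g) (u ∘L v) = u ∘L v := fun g => by
        rw [hconj_uv g, hall g, one_smul]
      obtain ⟨c, hc⟩ := herg _ (mul_mem huM hvM) (by
        simpa [ContinuousLinearMap.mul_def] using hfix)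
      rw [ContinuousLinearMap.mul_def] at hc
      obtain ⟨w, hw1, hw2⟩ := hinvS v ⟨hvM, hvne, ψ, hψ⟩
      have hvu : v ∘L u = c • 1 := by
        calc v ∘L u = (v ∘L u) ∘L (v ∘L w) := by rw [hw1, ContinuousLinearMap.one_def, ContinuousLinearMap.comp_id]
        _ = v ∘L ((u ∘L v) ∘L w) := by
            rw [ContinuousLinearMap.comp_assoc, ContinuousLinearMap.comp_assoc]
        _ = v ∘L ((c • (1 : H →L[ℂ] H)) ∘L w) := by rw [hc]
        _ = c • (v ∘L w) := by
            rw [ContinuousLinearMap.smul_comp, ContinuousLinearMap.one_def,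
              ContinuousLinearMap.id_comp, ContinuousLinearMap.comp_smul]
        _ = c • (1 : H →L[ℂ] H) := by rw [hw1]
      rw [hc, hvu]
    · push_neg at hall
      obtain ⟨g, hg⟩ := hall
      have h1 : μ (u ∘L v) = 0 := by
        have h := hinv g (u ∘L v)
        rw [hconj_uv g, hμsmul] at h
        by_contra hne
        exact hg (mul_right_cancel₀ hne (by rw [h, one_mul]))
      have h2 : μ (v ∘L u) = 0 := by
        have h := hinv g (v ∘L u)
        rw [hconj_vu g, hμsmul] at h
        by_contra hne
        exact hg (mul_right_cancel₀ hne (by rw [h, one_mul]))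
      rw [h1, h2]
  -- the *-algebra spanned by S
  set A : Submodule ℂ (H →L[ℂ] H) := Submodule.span ℂ S with hAdef
  have hSA : ∀ u ∈ S, u ∈ A := fun u hu => Submodule.subset_span hu
  have h1A : (1 : H →L[ℂ] H) ∈ A := hSA 1 honeS
  have hmulA : ∀ a ∈ A, ∀ b ∈ A, a ∘L b ∈ A := by
    intro a ha b hb
    refine Submodule.span_induction₂ (p := fun x y _ _ => x ∘L y ∈ A)
      (fun x y hx hy => hSA _ (hmulS x hx y hy))
      (fun y _ => by rw [ContinuousLinearMap.zero_comp]; exact A.zero_mem)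
      (fun x _ => by rw [ContinuousLinearMap.comp_zero]; exact A.zero_mem)
      (fun x y z _ _ _ h1 h2 => by rw [ContinuousLinearMap.add_comp]; exact A.add_mem h1 h2)
      (fun x y z _ _ _ h1 h2 => by rw [ContinuousLinearMap.comp_add]; exact A.add_mem h1 h2)
      (fun r x y _ _ h => by rw [ContinuousLinearMap.smul_comp]; exact A.smul_mem r h)
      (fun r x y _ _ h => by rw [ContinuousLinearMap.comp_smul]; exact A.smul_mem r h)
      ha hb
  have hstarA : ∀ a ∈ A, star a ∈ A := by
    intro a ha
    refine Submodule.span_induction (p := fun x _ => star x ∈ A)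
      (fun x hx => hSA _ (hstarS x hx))
      (by rw [star_zero]; exact A.zero_mem)
      (fun x y _ _ h1 h2 => by rw [star_add]; exact A.add_mem h1 h2)
      (fun r x _ h => by rw [star_smul]; exact A.smul_mem _ h) ha
  have hμadd : ∀ a b : H →L[ℂ] H, μ (a + b) = μ a + μ b := by
    intro a b
    simp [hμdef, inner_add_right]
  have htrA : ∀ a ∈ A, ∀ b ∈ A, μ (a ∘L b) = μ (b ∘L a) := by
    intro a ha b hb
    refine Submodule.span_induction₂ (p := fun x y _ _ => μ (x ∘L y) = μ (y ∘L x))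
      (fun x y hx hy => htrS x hx y hy)
      (fun y _ => by simp only [ContinuousLinearMap.zero_comp, ContinuousLinearMap.comp_zero])
      (fun x _ => by simp only [ContinuousLinearMap.zero_comp, ContinuousLinearMap.comp_zero])
      (fun x y z _ _ _ h1 h2 => by
        rw [ContinuousLinearMap.add_comp, ContinuousLinearMap.comp_add, hμadd, hμadd, h1, h2])
      (fun x y z _ _ _ h1 h2 => by
        rw [ContinuousLinearMap.add_comp, ContinuousLinearMap.comp_add, hμadd, hμadd, h1, h2])
      (fun r x y _ _ h => by
        rw [ContinuousLinearMap.smul_comp, ContinuousLinearMap.comp_smul, hμsmul, hμsmul, h])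
      (fun r x y _ _ h => by
        rw [ContinuousLinearMap.smul_comp, ContinuousLinearMap.comp_smul, hμsmul, hμsmul, h])
      ha hb
  have hnormA : ∀ a ∈ A, ‖star a Ω‖ = ‖a Ω‖ := by
    intro a ha
    have h1 : μ (star a ∘L a) = (‖a Ω‖ : ℂ) ^ 2 := hμnormsq a
    have h2 : μ (a ∘L star a) = (‖star a Ω‖ : ℂ) ^ 2 := by
      have h := hμnormsq (star a)
      rwa [star_star] at h
    have h3 : (‖a Ω‖ : ℂ) ^ 2 = (‖star a Ω‖ : ℂ) ^ 2 := by
      rw [← h1, htrA _ (hstarA a ha) _ ha, h2]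
    have h4 : ‖a Ω‖ ^ 2 = ‖star a Ω‖ ^ 2 := by exact_mod_cast h3
    nlinarith [norm_nonneg (a Ω), norm_nonneg (star a Ω)]
  -- the GNS-type subspace
  set evalΩ : (H →L[ℂ] H) →ₗ[ℂ] H :=
    { toFun := fun a => a Ω
      map_add' := fun a b => rfl
      map_smul' := fun c a => rfl } with hevaldef
  set e₀ : ↥A →ₗ[ℂ] H := evalΩ ∘ₗ A.subtype with he₀def
  set W : Submodule ℂ H := LinearMap.range e₀ with hWdef
  have hmemW : ∀ a ∈ A, a Ω ∈ W := fun a ha => ⟨⟨a, ha⟩, rfl⟩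
  set K : Submodule ℂ H := W.topologicalClosure with hKdef
  have hWK : ∀ ξ ∈ W, ξ ∈ K := fun ξ h => W.le_topologicalClosure h
  have hKclosed : IsClosed (K : Set H) := W.isClosed_topologicalClosure
  haveI : CompleteSpace K := hKclosed.completeSpace_coe
  have hKcoe : (K : Set H) = closure (W : Set H) := W.topologicalClosure_coe
  have hWinv : ∀ u ∈ S, ∀ ξ ∈ W, u ξ ∈ W := by
    rintro u hu ξ ⟨⟨a, ha⟩, rfl⟩
    exact hmemW _ (hmulA u (hSA u hu) a ha)
  have hKinv : ∀ u ∈ S, ∀ ξ ∈ K, u ξ ∈ K := by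
    intro u hu ξ hξ
    have h1 : ξ ∈ closure (W : Set H) := by rw [← hKcoe]; exact hξ
    have h2 : u ξ ∈ closure (W : Set H) :=
      map_mem_closure u.continuous h1 (fun x hx => hWinv u hu x hx)
    rw [← hKcoe] at h2
    exact h2
  have hKperp : ∀ u ∈ S, ∀ ξ ∈ Kᗮ, u ξ ∈ Kᗮ := by
    intro u hu ξ hξ
    rw [Submodule.mem_orthogonal]
    intro κ hκ
    rw [← ContinuousLinearMap.adjoint_inner_left]
    rw [Submodule.mem_orthogonal] at hξ
    exact hξ _ (hKinv (star u) (hstarS u hu) κ hκ)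
  set P : H →L[ℂ] H := K.subtypeL ∘L K.orthogonalProjectionOnto with hPdef
  have hPapply : ∀ ξ, P ξ = (K.orthogonalProjectionOnto ξ : H) := fun _ => rfl
  have hPK : ∀ ξ ∈ K, P ξ = ξ := fun ξ h => K.starProjection_eq_self_iff.mpr h
  have hPperp : ∀ ξ ∈ Kᗮ, P ξ = 0 := by
    intro ξ h
    rw [hPapply, Submodule.orthogonalProjectionOnto_apply_of_mem_orthogonal h,
      Submodule.coe_zero]
  have hPmem : ∀ ξ, P ξ ∈ K := fun ξ => (K.orthogonalProjectionOnto ξ).2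
  have hPdec : ∀ ξ : H, ξ - P ξ ∈ Kᗮ := fun ξ => K.sub_starProjection_mem_orthogonal ξ
  have hPS : P ∈ Set.centralizer S := by
    intro u hu
    ext ξ
    show u (P ξ) = P (u ξ)
    have h1 : P (u (P ξ)) = u (P ξ) := hPK _ (hKinv u hu _ (hPmem ξ))
    have h2 : P (u (ξ - P ξ)) = 0 := hPperp _ (hKperp u hu _ (hPdec ξ))
    have h3 : u ξ = u (P ξ) + u (ξ - P ξ) := by
      rw [← map_add, add_sub_cancel]
    rw [h3, map_add, h1, h2, add_zero]
  have hΩK : Ω ∈ K := by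
    have := hWK _ (hmemW 1 h1A)
    simpa using this
  have haΩK : ∀ a ∈ Set.centralizer (Set.centralizer S), a Ω ∈ K := by
    intro a ha
    have hcomm : P * a = a * P := ha P hPS
    have : a Ω = P (a Ω) := by
      calc a Ω = a (P Ω) := by rw [hPK Ω hΩK]
      _ = (a * P) Ω := rfl
      _ = (P * a) Ω := by rw [← hcomm]
      _ = P (a Ω) := rfl
    rw [this]
    exact hPmem _
  -- right-multiplication operators
  have hRex : ∀ x ∈ S, ∃ R : H →L[ℂ] H,
      (∀ a ∈ A, R (a Ω) = a (x Ω)) ∧ R ∈ Set.centralizer S ∧ R Ω = x Ω := by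
    intro x hx
    obtain ⟨c, hcpos, hc⟩ := hcc (star x) (hstarS x hx)
    rw [star_star] at hc
    have hxA : x ∈ A := hSA x hx
    have hbound : ∀ y ∈ A, ‖y (x Ω)‖ ^ 2 = c * ‖y Ω‖ ^ 2 := by
      intro y hy
      have h1 : μ (star (y ∘L x) ∘L (y ∘L x)) = (‖(y ∘L x) Ω‖ : ℂ) ^ 2 := hμnormsq _
      have hstar : star (y ∘L x) = star x ∘L star y := by
        rw [← ContinuousLinearMap.mul_def, ← ContinuousLinearMap.mul_def, star_mul]
      have h2 : μ (star (y ∘L x) ∘L (y ∘L x)) = μ ((star y ∘L (y ∘L x)) ∘L star x) := by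
        rw [hstar, ContinuousLinearMap.comp_assoc]
        exact htrA _ (hstarA x hxA) _ (hmulA _ (hstarA y hy) _ (hmulA y hy x hxA))
      have h3 : (star y ∘L (y ∘L x)) ∘L star x = (c : ℂ) • (star y ∘L y) := by
        rw [ContinuousLinearMap.comp_assoc, ContinuousLinearMap.comp_assoc, hc,
          ContinuousLinearMap.comp_smul, ContinuousLinearMap.comp_smul,
          ContinuousLinearMap.one_def, ContinuousLinearMap.comp_id]
      have h4 : (‖(y ∘L x) Ω‖ : ℂ) ^ 2 = (c : ℂ) * (‖y Ω‖ : ℂ) ^ 2 := by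
        rw [← h1, h2, h3, hμsmul, hμnormsq]
      have h5 : ‖(y ∘L x) Ω‖ ^ 2 = c * ‖y Ω‖ ^ 2 := by exact_mod_cast h4
      exact h5
    obtain ⟨R, hRW, hR0⟩ := rightMul_extension A Ω (x Ω) c hcpos hbound
    have hR0' : ∀ ξ ∈ Kᗮ, R ξ = 0 := by
      intro ξ hξ
      apply hR0
      intro a ha
      rw [Submodule.mem_orthogonal] at hξ
      exact hξ _ (hWK _ (hmemW a ha))
    refine ⟨R, hRW, ?_, ?_⟩
    · intro u hu
      ext ξ
      show u (R ξ) = R (u ξ)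
      have hdec : P ξ + (ξ - P ξ) = ξ := add_sub_cancel _ _
      have hEq : Set.EqOn (fun η : H => u (R η)) (fun η => R (u η)) (W : Set H) := by
        rintro w ⟨y, rfl⟩
        show u (R ((y : H →L[ℂ] H) Ω)) = R (u ((y : H →L[ℂ] H) Ω))
        have h2 : u ((y : H →L[ℂ] H) Ω) = (u ∘L (y : H →L[ℂ] H)) Ω := rfl
        rw [hRW _ y.2, h2, hRW _ (hmulA u (hSA u hu) _ y.2)]
        rfl
      have hK : ∀ η ∈ K, u (R η) = R (u η) := by
        intro η hη
        have hcl := hEq.closure (u.continuous.comp R.continuous) (R.continuous.comp u.continuous)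
        have hmem : η ∈ closure (W : Set H) := by
          rw [← W.topologicalClosure_coe]; exact hη
        exact hcl hmem
      have e1 : R ξ = R (P ξ) := by
        conv_lhs => rw [← hdec]
        rw [map_add, hR0' _ (hPdec ξ), add_zero]
      have e2 : R (u ξ) = R (u (P ξ)) := by
        have h3 : u ξ = u (P ξ) + u (ξ - P ξ) := by rw [← map_add, hdec]
        rw [h3, map_add, hR0' _ (hKperp u hu _ (hPdec ξ)), add_zero]
      rw [e1, e2, hK _ (hPmem ξ)]
    · have h1 := hRW 1 h1A
      simpa using h1
  -- a ∈ A^K commutes in the state with every eigenoperator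
  have hLR : ∀ a ∈ Set.centralizer (Set.centralizer S), ∀ x ∈ S,
      μ (a ∘L x) = μ (x ∘L a) := by
    intro a ha x hx
    obtain ⟨R, hRW, hRc, hRΩ⟩ := hRex x hx
    have hcomm : R * a = a * R := ha R hRc
    have h1 : μ (a ∘L x) = ⟪Ω, R (a Ω)⟫ := by
      show ⟪Ω, a (x Ω)⟫ = _
      rw [← hRΩ]
      have h0 : a (R Ω) = R (a Ω) := by
        calc a (R Ω) = (a * R) Ω := rfl
        _ = (R * a) Ω := by rw [← hcomm]
        _ = R (a Ω) := rfl
      rw [h0]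
    have hEq : Set.EqOn (fun ξ : H => ⟪Ω, R ξ⟫) (fun ξ => ⟪star x Ω, ξ⟫) (W : Set H) := by
      rintro w ⟨y, rfl⟩
      show ⟪Ω, R ((y : H →L[ℂ] H) Ω)⟫ = ⟪star x Ω, (y : H →L[ℂ] H) Ω⟫
      rw [hRW _ y.2]
      have t2 := htrA _ y.2 x (hSA x hx)
      have t3 : μ (x ∘L (y : H →L[ℂ] H)) = ⟪Ω, x ((y : H →L[ℂ] H) Ω)⟫ := rfl
      have t4 : ⟪Ω, x ((y : H →L[ℂ] H) Ω)⟫ = ⟪star x Ω, (y : H →L[ℂ] H) Ω⟫ := by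
        rw [ContinuousLinearMap.star_eq_adjoint, ContinuousLinearMap.adjoint_inner_left]
      rw [← t4, ← t3, ← t2]
      rfl
    have hcl := hEq.closure (Continuous.inner continuous_const R.continuous)
      (Continuous.inner continuous_const continuous_id)
    have haK : a Ω ∈ closure (W : Set H) := by
      rw [← W.topologicalClosure_coe]; exact haΩK a ha
    have h2 : ⟪Ω, R (a Ω)⟫ = ⟪star x Ω, a Ω⟫ := hcl haK
    have h3 : ⟪star x Ω, a Ω⟫ = μ (x ∘L a) := by
      rw [ContinuousLinearMap.star_eq_adjoint, ContinuousLinearMap.adjoint_inner_left]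
      rfl
    rw [h1, h2, h3]
  have hLA : ∀ a ∈ Set.centralizer (Set.centralizer S), ∀ y ∈ A,
      μ (a ∘L y) = μ (y ∘L a) := by
    intro a ha y hy
    refine Submodule.span_induction (p := fun y _ => μ (a ∘L y) = μ (y ∘L a))
      (fun x hx => hLR a ha x hx)
      (by simp only [ContinuousLinearMap.zero_comp, ContinuousLinearMap.comp_zero])
      (fun x y _ _ h1 h2 => by
        rw [ContinuousLinearMap.comp_add, ContinuousLinearMap.add_comp, hμadd, hμadd, h1, h2])
      (fun r x _ h => by
        rw [ContinuousLinearMap.comp_smul, ContinuousLinearMap.smul_comp, hμsmul, hμsmul, h]) hy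
  -- star-closedness of the double centralizer
  have hstarC : ∀ r ∈ Set.centralizer S, star r ∈ Set.centralizer S := by
    intro r hr u hu
    have h := hr (star u) (hstarS u hu)
    calc u * star r = star (r * star u) := by rw [star_mul, star_star]
    _ = star (star u * r) := by rw [h]
    _ = star r * u := by rw [star_mul, star_star]
  have hstarAK : ∀ a ∈ Set.centralizer (Set.centralizer S),
      star a ∈ Set.centralizer (Set.centralizer S) := by
    intro a ha r hr
    have h := ha (star r) (hstarC r hr)
    calc r * star a = star (a * star r) := by rw [star_mul, star_star]
    _ = star (star r * a) := by rw [← h]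
    _ = star a * r := by rw [star_mul, star_star]
  -- the state ⟪·Ω, Ω⟫
  have hν : ∀ c : H →L[ℂ] H, ⟪c Ω, Ω⟫ = (starRingEnd ℂ) (μ c) := by
    intro c
    rw [← inner_conj_symm]
  have hstep : ∀ p ∈ A, ∀ q ∈ A, ⟪p (q Ω), Ω⟫ = ⟪q (p Ω), Ω⟫ := by
    intro p hp q hq
    have e1 : ⟪p (q Ω), Ω⟫ = ⟪(p ∘L q) Ω, Ω⟫ := rfl
    have e2 : ⟪q (p Ω), Ω⟫ = ⟪(q ∘L p) Ω, Ω⟫ := rfl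
    rw [e1, e2, hν, hν, htrA p hp q hq]
  -- the trace property on the double centralizer
  have hmain : ∀ a ∈ Set.centralizer (Set.centralizer S),
      ∀ b ∈ Set.centralizer (Set.centralizer S), μ (a ∘L b) = μ (b ∘L a) := by
    intro a ha b hb
    have hbΩ : b Ω ∈ closure (W : Set H) := by
      rw [← W.topologicalClosure_coe]; exact haΩK b hb
    obtain ⟨seq, hseqW, hseqlim⟩ := mem_closure_iff_seq_limit.mp hbΩ
    have hz : ∀ n, ∃ zz : ↥A, (zz : H →L[ℂ] H) Ω = seq n := fun n => hseqW n
    choose z hzeq using hz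
    have limz : Filter.Tendsto (fun n => (z n : H →L[ℂ] H) Ω) Filter.atTop (nhds (b Ω)) := by
      simpa [hzeq] using hseqlim
    have hcauchy : CauchySeq (fun n => (star (z n : H →L[ℂ] H)) Ω) := by
      have hc0 : CauchySeq (fun n => (z n : H →L[ℂ] H) Ω) := limz.cauchySeq
      rw [Metric.cauchySeq_iff] at hc0 ⊢
      intro ε hε
      obtain ⟨N, hN⟩ := hc0 ε hε
      refine ⟨N, fun m hm n hn => ?_⟩
      have hd := hN m hm n hn
      rw [dist_eq_norm] at hd ⊢
      have hsub : (star (z m : H →L[ℂ] H)) Ω - (star (z n : H →L[ℂ] H)) Ω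
          = (star ((z m : H →L[ℂ] H) - (z n : H →L[ℂ] H))) Ω := by
        rw [star_sub]; rfl
      rw [hsub, hnormA _ (A.sub_mem (z m).2 (z n).2)]
      exact hd
    obtain ⟨ζ, hζ⟩ := cauchySeq_tendsto_of_complete hcauchy
    have hζK : ζ ∈ K := by
      have hmem : ∀ n, (star (z n : H →L[ℂ] H)) Ω ∈ (K : Set H) :=
        fun n => hWK _ (hmemW _ (hstarA _ (z n).2))
      exact hKclosed.mem_of_tendsto hζ (Filter.Eventually.of_forall hmem)
    have hbsΩK : (star b) Ω ∈ K := haΩK (star b) (hstarAK b hb)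
    have hlimid : ∀ w ∈ (W : Set H), ⟪w, ζ - star b Ω⟫ = (0 : ℂ) := by
      rintro w ⟨y, rfl⟩
      show ⟪(y : H →L[ℂ] H) Ω, ζ - star b Ω⟫ = (0 : ℂ)
      have t2 : ∀ n, ⟪(y : H →L[ℂ] H) Ω, star (z n : H →L[ℂ] H) Ω⟫
          = ⟪(y : H →L[ℂ] H) ((z n : H →L[ℂ] H) Ω), Ω⟫ := by
        intro n
        rw [ContinuousLinearMap.star_eq_adjoint, ContinuousLinearMap.adjoint_inner_right]
        exact hstep _ (z n).2 _ y.2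
      have t3 : ⟪(y : H →L[ℂ] H) (b Ω), Ω⟫ = ⟪(y : H →L[ℂ] H) Ω, star b Ω⟫ := by
        have e1 : ⟪(y : H →L[ℂ] H) (b Ω), Ω⟫ = (starRingEnd ℂ) (μ ((y : H →L[ℂ] H) ∘L b)) :=
          hν ((y : H →L[ℂ] H) ∘L b)
        have e2 : ⟪b ((y : H →L[ℂ] H) Ω), Ω⟫ = (starRingEnd ℂ) (μ (b ∘L (y : H →L[ℂ] H))) :=
          hν (b ∘L (y : H →L[ℂ] H))
        rw [e1, ← hLA b hb _ y.2, ← e2, ContinuousLinearMap.star_eq_adjoint,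
          ContinuousLinearMap.adjoint_inner_right]
      have l1 : Filter.Tendsto (fun n => ⟪(y : H →L[ℂ] H) Ω, star (z n : H →L[ℂ] H) Ω⟫)
          Filter.atTop (nhds ⟪(y : H →L[ℂ] H) Ω, ζ⟫) :=
        Filter.Tendsto.inner tendsto_const_nhds hζ
      have l2 : Filter.Tendsto (fun n => ⟪(y : H →L[ℂ] H) ((z n : H →L[ℂ] H) Ω), Ω⟫)
          Filter.atTop (nhds ⟪(y : H →L[ℂ] H) (b Ω), Ω⟫) :=
        Filter.Tendsto.inner ((y : H →L[ℂ] H).continuous.tendsto (b Ω) |>.comp limz)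
          tendsto_const_nhds
      have l1' : Filter.Tendsto (fun n => ⟪(y : H →L[ℂ] H) ((z n : H →L[ℂ] H) Ω), Ω⟫)
          Filter.atTop (nhds ⟪(y : H →L[ℂ] H) Ω, ζ⟫) := by
        simpa only [t2] using l1
      have huni := tendsto_nhds_unique l1' l2
      rw [inner_sub_right, huni, t3, sub_self]
    have hδ : ζ = star b Ω := by
      have hEq0 : Set.EqOn (fun w : H => ⟪w, ζ - star b Ω⟫) (fun _ => (0 : ℂ)) (W : Set H) :=
        hlimid
      have hcl := hEq0.closure (Continuous.inner continuous_id continuous_const) continuous_const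
      have hself : ⟪ζ - star b Ω, ζ - star b Ω⟫ = (0 : ℂ) := by
        apply hcl
        rw [← W.topologicalClosure_coe]
        exact K.sub_mem hζK hbsΩK
      have := inner_self_eq_zero.mp hself
      rwa [sub_eq_zero] at this
    have hstarlim : Filter.Tendsto (fun n => (star (z n : H →L[ℂ] H)) Ω)
        Filter.atTop (nhds (star b Ω)) := by rwa [hδ] at hζ
    have hab : μ (a ∘L b) = ⟪star a Ω, b Ω⟫ := by
      rw [ContinuousLinearMap.star_eq_adjoint, ContinuousLinearMap.adjoint_inner_left]
      rfl
    have hba : μ (b ∘L a) = ⟪star b Ω, a Ω⟫ := by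
      rw [ContinuousLinearMap.star_eq_adjoint, ContinuousLinearMap.adjoint_inner_left]
      rfl
    rw [hab, hba]
    have l1 : Filter.Tendsto (fun n => ⟪star a Ω, (z n : H →L[ℂ] H) Ω⟫)
        Filter.atTop (nhds ⟪star a Ω, b Ω⟫) :=
      Filter.Tendsto.inner tendsto_const_nhds limz
    have l2 : Filter.Tendsto (fun n => ⟪(star (z n : H →L[ℂ] H)) Ω, a Ω⟫)
        Filter.atTop (nhds ⟪star b Ω, a Ω⟫) :=
      Filter.Tendsto.inner hstarlim tendsto_const_nhds
    have heq : ∀ n, ⟪star a Ω, (z n : H →L[ℂ] H) Ω⟫ = ⟪(star (z n : H →L[ℂ] H)) Ω, a Ω⟫ := by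
      intro n
      have e1 : ⟪star a Ω, (z n : H →L[ℂ] H) Ω⟫ = μ (a ∘L (z n : H →L[ℂ] H)) := by
        rw [ContinuousLinearMap.star_eq_adjoint, ContinuousLinearMap.adjoint_inner_left]
        rfl
      have e2 : ⟪(star (z n : H →L[ℂ] H)) Ω, a Ω⟫ = μ ((z n : H →L[ℂ] H) ∘L a) := by
        rw [ContinuousLinearMap.star_eq_adjoint, ContinuousLinearMap.adjoint_inner_left]
        rfl
      rw [e1, e2]
      exact hLA a ha _ (z n).2
    have l1' : Filter.Tendsto (fun n => ⟪(star (z n : H →L[ℂ] H)) Ω, a Ω⟫)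
        Filter.atTop (nhds ⟪star a Ω, b Ω⟫) := by
      simpa only [heq] using l1
    exact tendsto_nhds_unique l1' l2
  constructor
  · intro a ha b hb
    rw [hAK] at ha hb
    exact hmain a ha b hb
  · intro v hv hvv
    rw [hAK] at hv
    have hsv : star v ∈ Set.centralizer (Set.centralizer S) := hstarAK v hv
    have hqAK : v * star v ∈ Set.centralizer (Set.centralizer S) :=
      Set.mul_mem_centralizer hv hsv
    have hAKM : Set.centralizer (Set.centralizer S) ⊆ (M : Set (H →L[ℂ] H)) := by
      have h1 : S ⊆ (M : Set (H →L[ℂ] H)) := fun u hu => hu.1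
      have h3 := Set.centralizer_subset (Set.centralizer_subset h1)
      rwa [M.centralizer_centralizer] at h3
    have hμq : μ (v * star v) = 1 := by
      have h := hmain v hv (star v) hsv
      rw [show star v ∘L v = star v * v from rfl, hvv] at h
      rw [show v * star v = v ∘L star v from rfl, h]
      show ⟪Ω, (1 : H →L[ℂ] H) Ω⟫ = 1
      rw [ContinuousLinearMap.one_apply, hΩΩ]
    have hqstar : star (v * star v) = v * star v := by rw [star_mul, star_star]
    have hqq : (v * star v) * (v * star v) = v * star v := by
      rw [mul_assoc, ← mul_assoc (star v) v (star v), hvv, one_mul]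
    have hμ1q : μ (1 - v * star v) = 0 := by
      have hsub : μ (1 - v * star v) = μ 1 - μ (v * star v) := by
        simp only [hμdef, ContinuousLinearMap.sub_apply, inner_sub_right]
      rw [hsub, hμq]
      show ⟪Ω, (1 : H →L[ℂ] H) Ω⟫ - 1 = 0
      rw [ContinuousLinearMap.one_apply, hΩΩ, sub_self]
    have hnorm0 : ((1 : H →L[ℂ] H) - v * star v) Ω = 0 := by
      have hstar1q : star ((1 : H →L[ℂ] H) - v * star v) = 1 - v * star v := by
        rw [star_sub, star_one, hqstar]
      have hcomp : ((1 : H →L[ℂ] H) - v * star v) ∘L ((1 : H →L[ℂ] H) - v * star v)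
          = 1 - v * star v := by
        rw [← ContinuousLinearMap.mul_def, mul_sub, sub_mul, sub_mul, one_mul, mul_one, hqq]
        abel
      have hn := hμnormsq ((1 : H →L[ℂ] H) - v * star v)
      rw [hstar1q, hcomp, hμ1q] at hn
      have : (‖((1 : H →L[ℂ] H) - v * star v) Ω‖ : ℝ) ^ 2 = 0 := by exact_mod_cast hn.symm
      have h0 : ‖((1 : H →L[ℂ] H) - v * star v) Ω‖ = 0 := by
        nlinarith [norm_nonneg (((1 : H →L[ℂ] H) - v * star v) Ω)]
      exact norm_eq_zero.mp h0
    have h1qM : (1 : H →L[ℂ] H) - v * star v ∈ M := sub_mem (one_mem M) (hAKM hqAK)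
    have hz := hsep _ h1qM hnorm0
    have : (1 : H →L[ℂ] H) = v * star v := by rwa [sub_eq_zero] at hz
    exact this.symm
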